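/- Every pieceful rule set satisfies the existential stability property: for any two rules R1, R2 of the set and any piece-unifier μ = (B2', H1', u) of body(R2) with R1, either u maps no frontier variable of R2 to an existential variable of R1, or all frontier variables of R2 occur in B2'. -/

import Mathlib

open scoped Classical
noncomputable section

namespace ER

/-- Terms: constants or variables (variables occurring in instances are called nulls). -/
inductive Term where
  | const : ℕ → Term
  | var : ℕ → Term
deriving DecidableEq

def Term.isConst : Term → Prop
  | .const _ => True
  | .var _ => False

/-- An atom `p(t₁,…,tₙ)`. -/
structure Atom where
  pred : ℕ
  args : List Term
deriving DecidableEq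

def Atom.terms (a : Atom) : Set Term := {t | t ∈ a.args}
def Atom.vars (a : Atom) : Set ℕ := {v | Term.var v ∈ a.args}

def termsOf (S : Set Atom) : Set Term := ⋃ a ∈ S, a.terms
def varsOf (S : Set Atom) : Set ℕ := ⋃ a ∈ S, a.vars
/-- The nulls (non-constant terms) occurring in a set of atoms. -/
def nullsOf (S : Set Atom) : Set Term := {t | t ∈ termsOf S ∧ ¬ t.isConst}

def Term.subst (σ : ℕ → Term) : Term → Term
  | .const c => .const c
  | .var v => σ v

def Atom.subst (σ : ℕ → Term) (a : Atom) : Atom := ⟨a.pred, a.args.map (Term.subst σ)⟩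
def substSet (σ : ℕ → Term) (S : Set Atom) : Set Atom := (Atom.subst σ) '' S

/-- A homomorphism from `S1` to `S2`: a substitution of variables by terms mapping `S1` into `S2`. -/
def isHom (σ : ℕ → Term) (S1 S2 : Set Atom) : Prop := substSet σ S1 ⊆ S2

/-- An injective homomorphism (injective on the terms of the source). -/
def isInjHom (σ : ℕ → Term) (S1 S2 : Set Atom) : Prop :=
  isHom σ S1 S2 ∧ Set.InjOn (Term.subst σ) (termsOf S1)

/-- An instance is a finite set of ground atoms. -/
def IsInstance (I : Set Atom) : Prop := I.Finite ∧ ∀ t ∈ termsOf I, t.isConst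

/-- An existential rule, given by its body and head. -/
structure Rule where
  body : Set Atom
  head : Set Atom

def Rule.frontier (R : Rule) : Set ℕ := varsOf R.body ∩ varsOf R.head
def Rule.exist (R : Rule) : Set ℕ := varsOf R.head \ varsOf R.body

/-- Well-formed rule: finite non-empty body and head, no constants. -/
def WfRule (R : Rule) : Prop :=
  R.body.Finite ∧ R.head.Finite ∧ R.body.Nonempty ∧ R.head.Nonempty ∧
  ∀ t ∈ termsOf (R.body ∪ R.head), ¬ t.isConst

def WfList (L : List Rule) : Prop := ∀ R ∈ L, WfRule R

/-- Restriction of a substitution to a set of variables (default value elsewhere). -/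
def restrict (f : ℕ → Term) (F : Set ℕ) : ℕ → Term :=
  fun v => if v ∈ F then f v else Term.const 0

/-- A semi-oblivious naming of nulls for the rules of `L`: the null created for an
existential variable depends only on the rule and the restriction of the trigger to the
frontier, and distinct such data yield distinct nulls. -/
def SONaming (L : List Rule) (ν : Rule → (ℕ → Term) → ℕ → ℕ) : Prop :=
  (∀ R ∈ L, ∀ f g : ℕ → Term,
      restrict f R.frontier = restrict g R.frontier → ν R f = ν R g) ∧
  (∀ R ∈ L, ∀ R' ∈ L, ∀ f f' x x', ν R f x = ν R' f' x' →
      R = R' ∧ restrict f R.frontier = restrict f' R'.frontier ∧ x = x')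

/-- The safe extension of a trigger `π`, replacing each existential variable by its null. -/
def safeSub (ν : Rule → (ℕ → Term) → ℕ → ℕ) (R : Rule) (π : ℕ → Term) : ℕ → Term :=
  fun y => if y ∈ R.exist then Term.var (ν R (restrict π R.frontier) y) else π y

/-- One breadth-first semi-oblivious chase step. -/
def chaseStep (ν : Rule → (ℕ → Term) → ℕ → ℕ) (L : List Rule) (S : Set Atom) : Set Atom :=
  S ∪ {a | ∃ R ∈ L, ∃ π : ℕ → Term, isHom π R.body S ∧ a ∈ substSet (safeSub ν R π) R.head}

/-- The breadth-first semi-oblivious chase. -/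
def chaseF (ν : Rule → (ℕ → Term) → ℕ → ℕ) (L : List Rule) (I : Set Atom) : ℕ → Set Atom
  | 0 => I
  | k + 1 => chaseStep ν L (chaseF ν L I k)

def chaseInf (ν : Rule → (ℕ → Term) → ℕ → ℕ) (L : List Rule) (I : Set Atom) : Set Atom :=
  ⋃ k, chaseF ν L I k

/-- `L'` parallelises `L`. -/
def Parallelises (L' L : List Rule) : Prop :=
  ∀ ν ν', SONaming L ν → SONaming L' ν' → ∀ I, IsInstance I →
    (∃ σ, isInjHom σ (chaseInf ν L I) (chaseF ν' L' I 1)) ∧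
    (∃ σ, isHom σ (chaseF ν' L' I 1) (chaseInf ν L I))

def Parallelisable (L : List Rule) : Prop := ∃ L', WfList L' ∧ Parallelises L' L

/-- Boundedness of the semi-oblivious chase, uniformly over all instances. -/
def Bounded (L : List Rule) : Prop :=
  ∃ k, ∀ ν, SONaming L ν → ∀ I, IsInstance I → chaseF ν L I k = chaseInf ν L I

def ChaseFinite (L : List Rule) : Prop :=
  ∀ ν, SONaming L ν → ∀ I, IsInstance I → ∃ k, chaseF ν L I k = chaseInf ν L I

/-- Two atoms are `T`-linked if they share a term of `T`. -/
def linked (T : Set Term) (a b : Atom) : Prop := ∃ t ∈ T, t ∈ a.terms ∧ t ∈ b.terms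

/-- Connectivity in `S` by a path of atoms where consecutive atoms share a term of `T`. -/
def connectedIn (S : Set Atom) (T : Set Term) (a b : Atom) : Prop :=
  a ∈ S ∧ b ∈ S ∧ Relation.ReflTransGen (fun x y => x ∈ S ∧ y ∈ S ∧ linked T x y) a b

/-- `P` is closed in `S` w.r.t. `T`-linkedness. -/
def closedIn (S : Set Atom) (T : Set Term) (P : Set Atom) : Prop :=
  ∀ a ∈ S, ∀ b ∈ P, linked T a b → a ∈ P

/-- A piece of `S` w.r.t. `T`: a non-empty subset closed under `T`-linkedness and minimal such. -/
def IsPiece (S : Set Atom) (T : Set Term) (P : Set Atom) : Prop :=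
  P.Nonempty ∧ P ⊆ S ∧ closedIn S T P ∧
  ∀ P', P' ⊆ P → P'.Nonempty → closedIn S T P' → P' = P

/-- A single-piece rule: its head is a piece of itself w.r.t. its existential variables. -/
def SinglePiece (R : Rule) : Prop := IsPiece R.head (Term.var '' R.exist) R.head

/-- The rule used at step `k` of a derivation. -/
def ruleAt (L : List Rule) (r : ℕ → ℕ) (k : ℕ) : Rule := L.getD (r k) ⟨∅, ∅⟩

/-- The set of atoms produced by the `k`-th rule application of a derivation. -/
def producedAt (ν : Rule → (ℕ → Term) → ℕ → ℕ) (L : List Rule) (r : ℕ → ℕ)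
    (π : ℕ → ℕ → Term) (k : ℕ) : Set Atom :=
  substSet (safeSub ν (ruleAt L r k) (π k)) (ruleAt L r k).head

def derivState (ν : Rule → (ℕ → Term) → ℕ → ℕ) (L : List Rule) (I : Set Atom)
    (r : ℕ → ℕ) (π : ℕ → ℕ → Term) : ℕ → Set Atom
  | 0 => I
  | k + 1 => derivState ν L I r π k ∪ producedAt ν L r π k

/-- An `R`-derivation of length `n` from `I`: each step applies a trigger. -/
def IsDeriv (ν : Rule → (ℕ → Term) → ℕ → ℕ) (L : List Rule) (I : Set Atom) (n : ℕ)
    (r : ℕ → ℕ) (π : ℕ → ℕ → Term) : Prop :=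
  ∀ k < n, r k < L.length ∧ isHom (π k) (ruleAt L r k).body (derivState ν L I r π k)

/-- A pieceful derivation: each trigger maps its rule's frontier entirely into the terms of
the initial instance, or entirely into the terms produced by a single earlier application. -/
def PiecefulDeriv (ν : Rule → (ℕ → Term) → ℕ → ℕ) (L : List Rule) (I : Set Atom) (n : ℕ)
    (r : ℕ → ℕ) (π : ℕ → ℕ → Term) : Prop :=
  ∀ k < n, (∀ x ∈ (ruleAt L r k).frontier, π k x ∈ termsOf I) ∨
    ∃ j < k, ∀ x ∈ (ruleAt L r k).frontier, π k x ∈ termsOf (producedAt ν L r π j)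

/-- A pieceful rule set: every derivation from every instance is pieceful. -/
def PiecefulSet (L : List Rule) : Prop :=
  ∀ ν, SONaming L ν → ∀ I, IsInstance I → ∀ n r π,
    IsDeriv ν L I n r π → PiecefulDeriv ν L I n r π

/-- First-order structures for the semantics of rules. -/
structure Struct where
  D : Type
  nonempty : Nonempty D
  interp : ℕ → List D → Prop
  cinterp : ℕ → D

def evalT (M : Struct) (v : ℕ → M.D) : Term → M.D
  | .const c => M.cinterp c
  | .var x => v x

def holdsA (M : Struct) (v : ℕ → M.D) (a : Atom) : Prop :=
  M.interp a.pred (a.args.map (evalT M v))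

/-- Satisfaction of (the universal-existential closure of) a rule in a structure. -/
def satRule (M : Struct) (R : Rule) : Prop :=
  ∀ v : ℕ → M.D, (∀ a ∈ R.body, holdsA M v a) →
    ∃ w : ℕ → M.D, (∀ x ∈ varsOf R.body, w x = v x) ∧ ∀ a ∈ R.head, holdsA M w a

/-- Separating variables of `S' ⊆ S`: variables occurring both in `S'` and in `S \ S'`. -/
def sepVars (S' S : Set Atom) : Set ℕ := varsOf S' ∩ varsOf (S \ S')

/-- A piece-unifier `(S', H', u)` of a set of atoms `S` with a rule `R`. -/
def IsPieceUnifier (S : Set Atom) (R : Rule) (S' H' : Set Atom) (u : ℕ → Term) : Prop :=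
  Disjoint (varsOf S) (varsOf (R.body ∪ R.head)) ∧
  S'.Nonempty ∧ S' ⊆ S ∧ H' ⊆ R.head ∧
  (∀ x, x ∉ R.frontier ∪ varsOf S' → u x = Term.var x) ∧
  (∀ x ∈ R.frontier ∪ varsOf S', ∃ y ∈ varsOf R.head, u x = Term.var y) ∧
  (∀ x ∈ R.frontier, ∃ y ∈ R.frontier, u x = Term.var y) ∧
  (∀ x ∈ sepVars S' S, ∃ y ∈ R.frontier, u x = Term.var y) ∧
  substSet u S' = substSet u H'

/-- The existential stability property of a piece-unifier of `body R2` with `R1`. -/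
def StableUnifier (R2 R1 : Rule) (B2' : Set Atom) (u : ℕ → Term) : Prop :=
  (∀ x ∈ R2.frontier, u x ∉ Term.var '' R1.exist) ∨ R2.frontier ⊆ varsOf B2'

/-- The existential composition `R2 ∘_μ R1` w.r.t. a piece-unifier `μ = (B2', H1', u)`
of `body R2` with `R1`. -/
def compose (R2 R1 : Rule) (B2' : Set Atom) (u : ℕ → Term) : Rule :=
  if ∀ x ∈ R2.frontier, u x ∉ Term.var '' R1.exist then
    ⟨substSet u R1.body ∪ substSet u (R2.body \ B2'), substSet u R2.head⟩
  else
    ⟨substSet u R1.body ∪ substSet u (R2.body \ B2'),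
     substSet u R1.head ∪ substSet u R2.head⟩

/-- The closure `R*` of a rule set under existential composition. -/
inductive InClosure (𝒮 : Set Rule) : Rule → Prop
  | base {R : Rule} : R ∈ 𝒮 → InClosure 𝒮 R
  | comp {Ri Rj : Rule} {B' H' : Set Atom} {u : ℕ → Term} :
      InClosure 𝒮 Ri → InClosure 𝒮 Rj →
      IsPieceUnifier Ri.body Rj B' H' u → InClosure 𝒮 (compose Ri Rj B' u)

def ruleSet (L : List Rule) : Set Rule := {R | R ∈ L}

/-- The stability property for a (possibly infinite) rule set. -/
def StableSet (𝒮 : Set Rule) : Prop :=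
  ∀ R1 ∈ 𝒮, ∀ R2 ∈ 𝒮, ∀ B2' H1' u,
    IsPieceUnifier R2.body R1 B2' H1' u → StableUnifier R2 R1 B2' u

/-- `J` is a result of one breadth-first chase step of a (possibly infinite) rule set on `I`,
with fresh pairwise-compatible nulls (semi-oblivious naming). -/
def OneStepResult (𝒮 : Set Rule) (I J : Set Atom) : Prop :=
  ∃ ν : Rule → (ℕ → Term) → ℕ → ℕ,
    (∀ R ∈ 𝒮, ∀ f x, Term.var (ν R f x) ∉ termsOf I) ∧
    (∀ R ∈ 𝒮, ∀ R' ∈ 𝒮, ∀ f f' x x', ν R f x = ν R' f' x' →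
        R = R' ∧ restrict f R.frontier = restrict f' R'.frontier ∧ x = x') ∧
    J = I ∪ {a | ∃ R ∈ 𝒮, ∃ π : ℕ → Term, isHom π R.body I ∧
                  a ∈ substSet (safeSub ν R π) R.head}

/-- `I, R ⊨ q` for a Boolean conjunctive query `q` (a set of atoms). -/
def Entails (L : List Rule) (I q : Set Atom) : Prop :=
  ∀ ν, SONaming L ν → ∃ k σ, isHom σ q (chaseF ν L I k)

/-- The null `t` occurs in at least `n` atoms of `S`. -/
def occursInAtLeast (S : Set Atom) (t : Term) (n : ℕ) : Prop :=
  ∃ F : Set Atom, F ⊆ {a | a ∈ S ∧ t ∈ a.terms} ∧ F.Finite ∧ n ≤ F.ncard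

def FrontierGuarded (R : Rule) : Prop := ∃ a ∈ R.body, R.frontier ⊆ a.vars

def IsDatalog (R : Rule) : Prop := R.exist = ∅ ∧ ∃ a, R.head = {a}

end ER

namespace ER

/-! ### Auxiliary lemmas -/

lemma mem_varsOf {S : Set Atom} {v : ℕ} : v ∈ varsOf S ↔ ∃ a ∈ S, Term.var v ∈ a.args := by
  simp [varsOf, Atom.vars]

lemma mem_termsOf {S : Set Atom} {t : Term} : t ∈ termsOf S ↔ ∃ a ∈ S, t ∈ a.args := by
  simp [termsOf, Atom.terms]

lemma varsOf_mono {A B : Set Atom} (h : A ⊆ B) : varsOf A ⊆ varsOf B := by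
  intro v hv
  rcases mem_varsOf.mp hv with ⟨a, ha, hva⟩
  exact mem_varsOf.mpr ⟨a, h ha, hva⟩

lemma varsOf_union {A B : Set Atom} : varsOf (A ∪ B) = varsOf A ∪ varsOf B := by
  ext v
  simp only [mem_varsOf, Set.mem_union]
  constructor
  · rintro ⟨a, ha | ha, hv⟩
    · exact Or.inl ⟨a, ha, hv⟩
    · exact Or.inr ⟨a, ha, hv⟩
  · rintro (⟨a, ha, hv⟩ | ⟨a, ha, hv⟩)
    · exact ⟨a, Or.inl ha, hv⟩
    · exact ⟨a, Or.inr ha, hv⟩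

lemma head_vars (R : Rule) : varsOf R.head = R.frontier ∪ R.exist := by
  ext v
  simp only [Rule.frontier, Rule.exist, Set.mem_union, Set.mem_inter_iff, Set.mem_diff]
  tauto

lemma atom_vars_finite (a : Atom) : a.vars.Finite := by
  have h : a.vars = Term.var ⁻¹' {t | t ∈ a.args} := rfl
  rw [h]
  exact Set.Finite.preimage (fun x _ y _ h => by cases h; rfl) a.args.finite_toSet

lemma varsOf_finite {S : Set Atom} (hS : S.Finite) : (varsOf S).Finite :=
  hS.biUnion fun a _ => atom_vars_finite a

instance : Countable Term := by
  have hinj : Function.Injective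
      (fun t : Term => match t with | .const c => Sum.inl c | .var v => Sum.inr v) := by
    intro a b h; cases a <;> cases b <;> simp_all
  exact hinj.countable

lemma Term_subst_comp (σ τ : ℕ → Term) (t : Term) :
    Term.subst σ (Term.subst τ t) = Term.subst (fun v => Term.subst σ (τ v)) t := by
  cases t <;> simp [Term.subst]

lemma Atom_subst_comp (σ τ : ℕ → Term) (a : Atom) :
    Atom.subst σ (Atom.subst τ a) = Atom.subst (fun v => Term.subst σ (τ v)) a := by
  simp only [Atom.subst, List.map_map]
  congr 1
  exact List.map_congr_left fun t _ => Term_subst_comp σ τ t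

lemma Atom_subst_congr {σ τ : ℕ → Term} {a : Atom} (h : ∀ v ∈ a.vars, σ v = τ v) :
    Atom.subst σ a = Atom.subst τ a := by
  simp only [Atom.subst]
  congr 1
  refine List.map_congr_left fun t ht => ?_
  cases t with
  | const c => rfl
  | var v => exact h v ht

/-- A key type used to build a semi-oblivious naming. -/
abbrev SKey (L : List Rule) : Type :=
  Σ i : Fin L.length, {g : ℕ → Term // ∀ v, v ∉ (L.get i).frontier → g v = Term.const 0} × ℕ

lemma skey_countable (L : List Rule) (hL : WfList L) : Countable (SKey L) := by
  have hfin : ∀ i : Fin L.length, ((L.get i).frontier).Finite := by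
    intro i
    have hwf := hL (L.get i) (L.get_mem i)
    exact (varsOf_finite hwf.1).subset Set.inter_subset_left
  have hsub : ∀ i : Fin L.length,
      Countable {g : ℕ → Term // ∀ v, v ∉ (L.get i).frontier → g v = Term.const 0} := by
    intro i
    haveI := (hfin i).to_subtype
    have hinj : Function.Injective
        (fun g : {g : ℕ → Term // ∀ v, v ∉ (L.get i).frontier → g v = Term.const 0} =>
          (fun v : (L.get i).frontier => g.1 v)) := by
      intro g g' h
      apply Subtype.ext
      funext v
      by_cases hv : v ∈ (L.get i).frontier
      · exact congrFun h ⟨v, hv⟩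
      · rw [g.2 v hv, g'.2 v hv]
    exact hinj.countable
  haveI := hsub
  exact instCountableSigma

def skeyMk (L : List Rule) (i : Fin L.length) (f : ℕ → Term) (x : ℕ) : SKey L :=
  ⟨i, ⟨⟨restrict f (L.get i).frontier, fun v hv => if_neg hv⟩, x⟩⟩

lemma skeyMk_congr (L : List Rule) (i : Fin L.length) {f g : ℕ → Term} (x : ℕ)
    (h : restrict f (L.get i).frontier = restrict g (L.get i).frontier) :
    skeyMk L i f x = skeyMk L i g x := by
  unfold skeyMk
  exact congrArg (fun s => (⟨i, ⟨s, x⟩⟩ : SKey L)) (Subtype.ext h)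

lemma sonaming_exists (L : List Rule) (hL : WfList L) : ∃ ν, SONaming L ν := by
  haveI := skey_countable L hL
  obtain ⟨inj, hinj⟩ := exists_injective_nat (SKey L)
  refine ⟨fun R f x =>
    if h : ∃ i : Fin L.length, L.get i = R then inj (skeyMk L h.choose f x) else 0, ?_, ?_⟩
  · intro R hR f g hfg
    have hex : ∃ i : Fin L.length, L.get i = R := List.mem_iff_get.mp hR
    funext x
    simp only [dif_pos hex]
    congr 1
    apply skeyMk_congr
    rw [hex.choose_spec]; exact hfg
  · intro R hR R' hR' f f' x x' heq
    have hex : ∃ i : Fin L.length, L.get i = R := List.mem_iff_get.mp hR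
    have hex' : ∃ i : Fin L.length, L.get i = R' := List.mem_iff_get.mp hR'
    simp only [dif_pos hex, dif_pos hex'] at heq
    have hkey := hinj heq
    have hi : hex.choose = hex'.choose := congrArg Sigma.fst hkey
    have hRR' : R = R' := by rw [← hex.choose_spec, ← hex'.choose_spec, hi]
    rw [← hi] at hkey
    unfold skeyMk at hkey
    injection hkey with h1 h2
    injection h2 with h3 h4
    have h5 := congrArg Subtype.val h3
    refine ⟨hRR', ?_, h4⟩
    rw [← hRR', ← hex.choose_spec]
    exact h5

end ER

namespace ER
/-- every pieceful rule set satisfies the existential stability property. -/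
theorem pieceful_implies_stability (L : List Rule) (hL : WfList L) (hp : PiecefulSet L) :
    ∀ R1 ∈ L, ∀ R2 ∈ L, ∀ B2' H1' u,
      IsPieceUnifier R2.body R1 B2' H1' u → StableUnifier R2 R1 B2' u := by
  intro R1 hR1 R2 hR2 B2' H1' u hpu
  by_contra hns
  unfold StableUnifier at hns
  push_neg at hns
  obtain ⟨⟨x0, hx0f, hx0e⟩, hB⟩ := hns
  obtain ⟨x1, hx1f, hx1B⟩ := Set.not_subset.mp hB
  obtain ⟨e, heE, heq⟩ := hx0e
  obtain ⟨hdisj, hne, hB2sub, hH1sub, hu_id, hu_range, hu_fr, hu_sep, huBH⟩ := hpu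
  have hwf1 := hL R1 hR1
  have hwf2 := hL R2 hR2
  have hdisj' : ∀ v ∈ varsOf R2.body, v ∉ varsOf R1.body ∧ v ∉ varsOf R1.head := by
    intro v hv
    have h := Set.disjoint_left.mp hdisj hv
    simp only [varsOf_union, Set.mem_union, not_or] at h
    exact h
  have hfr1_body : R1.frontier ⊆ varsOf R1.body := Set.inter_subset_left
  have hex1_head : R1.exist ⊆ varsOf R1.head := fun v hv => hv.1
  have hfr_not_ex : ∀ y ∈ R1.frontier, y ∉ R1.exist := fun y hy hye => hye.2 hy.1
  obtain ⟨ν, hν⟩ := sonaming_exists L hL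
  obtain ⟨i1, hi1len, hi1⟩ := List.mem_iff_getElem.mp hR1
  obtain ⟨i2, hi2len, hi2⟩ := List.mem_iff_getElem.mp hR2
  set r : ℕ → ℕ := fun k => if k = 0 then i1 else i2 with hr
  have hrule0 : ruleAt L r 0 = R1 := by
    simp only [ruleAt, hr, if_pos rfl]
    rw [List.getD_eq_getElem L _ hi1len]; exact hi1
  have hrule1 : ruleAt L r 1 = R2 := by
    simp only [ruleAt, hr, if_neg one_ne_zero]
    rw [List.getD_eq_getElem L _ hi2len]; exact hi2
  set π0 : ℕ → Term := fun y => if y ∈ R1.frontier then Term.const 1 else Term.const (y + 2)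
    with hπ0
  set s : ℕ → Term := safeSub ν R1 π0 with hs
  set π1 : ℕ → Term := fun x => Term.subst s (u x) with hπ1
  set π : ℕ → ℕ → Term := fun k => if k = 0 then π0 else π1 with hπ
  have hπzero : π 0 = π0 := by simp [hπ]
  have hπone : π 1 = π1 := by simp [hπ]
  have hπ1app : ∀ x, π1 x = Term.subst s (u x) := fun x => by rw [hπ1]
  have hs_nex : ∀ y, y ∉ R1.exist → s y = π0 y := fun y hy => if_neg hy
  have hπ0_fr : ∀ y ∈ R1.frontier, π0 y = Term.const 1 := by
    intro y hy; rw [hπ0]; exact if_pos hy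
  have hπ0_nfr : ∀ y, y ∉ R1.frontier → π0 y = Term.const (y + 2) := by
    intro y hy; rw [hπ0]; exact if_neg hy
  have hs_fr : ∀ y ∈ R1.frontier, s y = Term.const 1 := by
    intro y hy
    rw [hs_nex y (hfr_not_ex y hy)]; exact hπ0_fr y hy
  have hu_ex : ∀ v ∈ R1.exist, u v = Term.var v := by
    intro v hv
    apply hu_id
    rintro (hvf | hvB)
    · exact hv.2 hvf.1
    · exact (hdisj' v (varsOf_mono hB2sub hvB)).2 (hex1_head hv)
  have hu_out : ∀ x ∈ varsOf R2.body, x ∉ varsOf B2' → u x = Term.var x := by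
    intro x hx hxB
    apply hu_id
    rintro (hf | hB')
    · exact (hdisj' x hx).1 (hfr1_body hf)
    · exact hxB hB'
  have hπ1_ground : ∀ a ∈ R2.body \ B2', ∀ v ∈ a.vars, ∃ c, π1 v = Term.const c := by
    intro a ha v hv
    have hvbody : v ∈ varsOf R2.body := mem_varsOf.mpr ⟨a, ha.1, hv⟩
    by_cases hvB : v ∈ varsOf B2'
    · have hsep : v ∈ sepVars B2' R2.body := ⟨hvB, mem_varsOf.mpr ⟨a, ha, hv⟩⟩
      obtain ⟨y, hyf, hy⟩ := hu_sep v hsep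
      refine ⟨1, ?_⟩
      rw [hπ1app v, hy]
      exact hs_fr y hyf
    · have hvu := hu_out v hvbody hvB
      have hvnf : v ∉ R1.frontier := fun h => (hdisj' v hvbody).1 (hfr1_body h)
      have hvne : v ∉ R1.exist := fun h => (hdisj' v hvbody).2 (hex1_head h)
      refine ⟨v + 2, ?_⟩
      rw [hπ1app v, hvu]
      show s v = _
      rw [hs_nex v hvne]; exact hπ0_nfr v hvnf
  set I : Set Atom := substSet π0 R1.body ∪ substSet π1 (R2.body \ B2') with hI_def
  have hIground : ∀ t ∈ termsOf I, t.isConst := by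
    intro t ht
    obtain ⟨b, hb, htb⟩ := mem_termsOf.mp ht
    rw [hI_def] at hb
    cases hb with
    | inl hb =>
      obtain ⟨a, _, rfl⟩ := hb
      obtain ⟨t0, _, rfl⟩ := List.mem_map.mp htb
      cases t0 with
      | const c => trivial
      | var v =>
        show (π0 v).isConst
        by_cases hv : v ∈ R1.frontier
        · rw [hπ0_fr v hv]; trivial
        · rw [hπ0_nfr v hv]; trivial
    | inr hb =>
      obtain ⟨a, ha, rfl⟩ := hb
      obtain ⟨t0, ht0, rfl⟩ := List.mem_map.mp htb
      cases t0 with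
      | const c => trivial
      | var v =>
        obtain ⟨c, hc⟩ := hπ1_ground a ha v ht0
        show (π1 v).isConst
        rw [hc]; trivial
  have hIfin : I.Finite :=
    Set.Finite.union (hwf1.1.image _) ((hwf2.1.subset Set.diff_subset).image _)
  have hI : IsInstance I := ⟨hIfin, hIground⟩
  have hπ1_atom : ∀ a : Atom, Atom.subst π1 a = Atom.subst s (Atom.subst u a) := by
    intro a
    rw [Atom_subst_comp, hπ1]
  have hprod0 : producedAt ν L r π 0 = substSet s R1.head := by
    simp only [producedAt, hrule0, hπzero, ← hs]
  have hhead_vars_eq : ∀ h ∈ R1.head, ∀ v ∈ h.vars, π1 v = s v := by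
    intro h hh v hv
    have hvhead : v ∈ varsOf R1.head := mem_varsOf.mpr ⟨h, hh, hv⟩
    rw [head_vars] at hvhead
    cases hvhead with
    | inl hvf =>
      obtain ⟨y, hyf, hy⟩ := hu_fr v hvf
      rw [hπ1app v, hy]
      show s y = s v
      rw [hs_fr y hyf, hs_fr v hvf]
    | inr hve =>
      rw [hπ1app v, hu_ex v hve]
      rfl
  have hB2'_to_prod : ∀ a ∈ B2', Atom.subst π1 a ∈ substSet s R1.head := by
    intro a ha
    have hmem : Atom.subst u a ∈ substSet u H1' := by
      rw [← huBH]; exact ⟨a, ha, rfl⟩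
    obtain ⟨h, hh, hah⟩ := hmem
    have h1 : Atom.subst π1 a = Atom.subst π1 h := by
      rw [hπ1_atom a, hπ1_atom h, hah]
    have h2 : Atom.subst π1 h = Atom.subst s h :=
      Atom_subst_congr (fun v hv => hhead_vars_eq h (hH1sub hh) v hv)
    exact ⟨h, hH1sub hh, (h1.trans h2).symm⟩
  have hstate1 : derivState ν L I r π 1 = I ∪ producedAt ν L r π 0 := rfl
  have hderiv : IsDeriv ν L I 2 r π := by
    intro k hk
    interval_cases k
    · refine ⟨by simpa [hr] using hi1len, ?_⟩
      rw [hrule0, hπzero]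
      intro b hb
      show b ∈ I
      rw [hI_def]
      exact Set.mem_union_left _ hb
    · refine ⟨by simpa [hr] using hi2len, ?_⟩
      rw [hrule1, hπone]
      intro b hb
      obtain ⟨a, ha, rfl⟩ := hb
      rw [hstate1]
      by_cases haB : a ∈ B2'
      · right
        rw [hprod0]
        exact hB2'_to_prod a haB
      · left
        rw [hI_def]
        exact Set.mem_union_right _ ⟨a, ⟨ha, haB⟩, rfl⟩
  have hpd := hp ν hν I hI 2 r π hderiv 1 one_lt_two
  rw [hrule1, hπone] at hpd
  cases hpd with
  | inl h =>
    have hx0 := h x0 hx0f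
    have hval : π1 x0 = Term.var (ν R1 (restrict π0 R1.frontier) e) := by
      rw [hπ1app x0, ← heq]
      show s e = _
      rw [hs]
      exact if_pos heE
    rw [hval] at hx0
    exact hIground _ hx0
  | inr h =>
    obtain ⟨j, hj, h⟩ := h
    interval_cases j
    have hx1 := h x1 hx1f
    rw [hprod0] at hx1
    have hx1body : x1 ∈ varsOf R2.body := hx1f.1
    have hx1nf : x1 ∉ R1.frontier := fun hh => (hdisj' x1 hx1body).1 (hfr1_body hh)
    have hx1ne : x1 ∉ R1.exist := fun hh => (hdisj' x1 hx1body).2 (hex1_head hh)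
    have hval : π1 x1 = Term.const (x1 + 2) := by
      rw [hπ1app x1, hu_out x1 hx1body hx1B]
      show s x1 = _
      rw [hs_nex x1 hx1ne]
      exact hπ0_nfr x1 hx1nf
    rw [hval] at hx1
    obtain ⟨b, hb, htb⟩ := mem_termsOf.mp hx1
    obtain ⟨h0, hh0, rfl⟩ := hb
    obtain ⟨t0, ht0, hteq⟩ := List.mem_map.mp htb
    have hnoconst := hwf1.2.2.2.2 t0 (mem_termsOf.mpr ⟨h0, Set.mem_union_right _ hh0, ht0⟩)
    cases t0 with
    | const c => exact hnoconst trivial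
    | var v =>
      have hvhead : v ∈ varsOf R1.head := mem_varsOf.mpr ⟨h0, hh0, ht0⟩
      rw [head_vars] at hvhead
      have hteq2 : s v = Term.const (x1 + 2) := hteq
      cases hvhead with
      | inl hvf =>
        rw [hs_fr v hvf] at hteq2
        simp only [Term.const.injEq] at hteq2
        omega
      | inr hve =>
        rw [hs] at hteq2
        rw [show safeSub ν R1 π0 v = Term.var (ν R1 (restrict π0 R1.frontier) v) from
          if_pos hve] at hteq2
        exact Term.noConfusion hteq2
end ER
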